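/- arXiv:2604.25320 — 3 statements merged into one kernel-verified Lean document; each statement's English description precedes it below -/
import Mathlib

section
/- Let (f_n)_{n≥1} be a sequence of holomorphic self-maps of the unit disk 𝔻 whose forward iterates F_n := f_n ∘ ⋯ ∘ f_1 converge locally uniformly on 𝔻 to a nonconstant holomorphic self-map F of 𝔻. Let K_n := ord_0(F_n − F_n(0)) and K := ord_0(F − F(0)). Then the sequence (K_n) is nondecreasing and there exists N such that K_n = K for all n ≥ N. -/
open Filter Metric Set

open Topology

noncomputable section

/-- The open unit disk in the complex plane. -/
def unitDisk : Set ℂ := Metric.ball (0 : ℂ) 1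

/-- A holomorphic self-map of the unit disk. -/
def IsHolSelfMap (f : ℂ → ℂ) : Prop :=
  DifferentiableOn ℂ f unitDisk ∧ Set.MapsTo f unitDisk unitDisk

/-- The order of vanishing of `g` at `w`: the least `k` such that the `k`-th derivative of
`g` at `w` is nonzero (`⊤` if all derivatives vanish). -/
def ordAt (g : ℂ → ℂ) (w : ℂ) : ℕ∞ :=
  sInf {n : ℕ∞ | ∃ k : ℕ, (k : ℕ∞) = n ∧ iteratedDeriv k g w ≠ 0}

lemma isOpen_unitDisk' : IsOpen unitDisk := isOpen_ball

lemma iteratedDeriv_eq_coeff {g : ℂ → ℂ} {p : FormalMultilinearSeries ℂ ℂ ℂ} {z₀ : ℂ}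
    (hp : HasFPowerSeriesAt g p z₀) (n : ℕ) :
    iteratedDeriv n g z₀ = (n.factorial : ℂ) * p.coeff n := by
  obtain ⟨r, hr⟩ := hp
  have h := hr.factorial_smul (1 : ℂ) n
  rw [iteratedDeriv_eq_iteratedFDeriv, ← h, nsmul_eq_mul]
  rfl

lemma ordAt_eq_order {g : ℂ → ℂ} {z₀ : ℂ} (hg : AnalyticAt ℂ g z₀) :
    ordAt g z₀ = analyticOrderAt g z₀ := by
  obtain ⟨p, hp⟩ := id hg
  by_cases h0 : ∀ᶠ z in 𝓝 z₀, g z = 0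
  · rw [analyticOrderAt_eq_top.mpr h0]
    have hp0 : p = 0 := hp.locally_zero_iff.mp h0
    have he : {n : ℕ∞ | ∃ k : ℕ, (k : ℕ∞) = n ∧ iteratedDeriv k g z₀ ≠ 0} = ∅ := by
      ext n
      simp only [mem_setOf_eq, mem_empty_iff_false, iff_false, not_exists]
      rintro k ⟨hk, hne⟩
      refine hne ?_
      rw [iteratedDeriv_eq_coeff hp, hp0]
      rw [FormalMultilinearSeries.coeff_eq_zero.mpr (by simp), mul_zero]
    rw [ordAt, he, sInf_empty]
  · have hpne : p ≠ 0 := fun h => h0 (hp.locally_zero_iff.mpr h)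
    have horder : analyticOrderAt g z₀ = (p.order : ℕ∞) := by
      rw [hg.analyticOrderAt_eq_natCast]
      exact ⟨_, ⟨_, hp.has_fpower_series_iterate_dslope_fslope p.order⟩,
        hp.iterate_dslope_fslope_ne_zero hpne, Eventually.of_forall hp.eq_pow_order_mul_iterate_dslope⟩
    rw [horder, ordAt]
    apply le_antisymm
    · apply sInf_le
      refine ⟨p.order, rfl, ?_⟩
      rw [iteratedDeriv_eq_coeff hp]
      have h1 : p.coeff p.order ≠ 0 :=
        fun hc => p.apply_order_ne_zero hpne (FormalMultilinearSeries.coeff_eq_zero.mp hc)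
      have h2 : ((p.order).factorial : ℂ) ≠ 0 := by
        exact_mod_cast (Nat.factorial_ne_zero _)
      exact mul_ne_zero h2 h1
    · apply le_sInf
      rintro b ⟨k, rfl, hk⟩
      have hc : p.coeff k ≠ 0 := by
        intro hc; exact hk (by rw [iteratedDeriv_eq_coeff hp, hc, mul_zero])
      have hle : p.order ≤ k := by
        by_contra hlt
        exact hc (FormalMultilinearSeries.coeff_eq_zero.mpr (p.apply_eq_zero_of_lt_order (not_le.mp hlt)))
      exact_mod_cast hle

lemma global_factor {g : ℂ → ℂ} (hg : AnalyticOnNhd ℂ g unitDisk)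
    {k : ℕ} {u : ℂ → ℂ} (hu : AnalyticAt ℂ u 0) (hu0 : u 0 ≠ 0)
    (heq : ∀ᶠ z in 𝓝 (0:ℂ), g z = (z - 0) ^ k • u z) :
    ∃ U : ℂ → ℂ, AnalyticOnNhd ℂ U unitDisk ∧ U 0 ≠ 0 ∧
      ∀ z ∈ unitDisk, g z = z ^ k * U z := by
  classical
  refine ⟨fun z => if z = 0 then u 0 else g z / z ^ k, ?_, by simp [hu0], ?_⟩
  · intro w hw
    by_cases hw0 : w = 0
    · subst hw0
      apply hu.congr
      filter_upwards [heq] with z hz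
      by_cases h : z = 0
      · simp [h]
      · simp only [if_neg h]
        rw [hz]
        simp only [sub_zero, smul_eq_mul]
        field_simp
    · have hev : ∀ᶠ z in 𝓝 w, (fun z : ℂ => g z / z ^ k) z
          = (if z = 0 then u 0 else g z / z ^ k) := by
        filter_upwards [eventually_ne_nhds hw0] with z hz
        simp [hz]
      exact ((hg w hw).div (analyticAt_id.pow k) (pow_ne_zero k hw0)).congr hev
  · intro z hz
    by_cases h : z = 0
    · subst h
      have h0 : g 0 = 0 ^ k * u 0 := by simpa [smul_eq_mul] using heq.self_of_nhds
      simpa using h0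
    · simp only [if_neg h]
      field_simp

lemma key_integral {g U : ℂ → ℂ} {k : ℕ} {r : ℝ} (hr : 0 < r)
    (hrD : closedBall (0:ℂ) r ⊆ unitDisk)
    (hU : AnalyticOnNhd ℂ U unitDisk)
    (hUne : ∀ z ∈ closedBall (0:ℂ) r, U z ≠ 0)
    (hfac : ∀ z ∈ unitDisk, g z = z ^ k * U z) :
    (∮ z in C(0, r), deriv g z / g z) = 2 * Real.pi * Complex.I * k := by
  have hUd : AnalyticOnNhd ℂ (deriv U) unitDisk := hU.deriv
  set f1 : ℂ → ℂ := fun z => (k : ℂ) / z with hf1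
  set f2 : ℂ → ℂ := fun z => deriv U z / U z with hf2
  set q : ℂ → ℂ := fun z => f1 z + f2 z with hq
  -- the integrand equals q on the sphere
  have h_eqOn : EqOn (fun z => deriv g z / g z) q (sphere (0:ℂ) r) := by
    intro z hz
    have hzD : z ∈ unitDisk := hrD (sphere_subset_closedBall hz)
    have hz0 : z ≠ 0 := by
      intro h; rw [h] at hz; simp [mem_sphere_iff_norm] at hz; exact hr.ne' hz.symm
    have hUz : U z ≠ 0 := hUne z (sphere_subset_closedBall hz)
    have hev : g =ᶠ[𝓝 z] fun w => w ^ k * U w :=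
      Filter.eventuallyEq_of_mem (isOpen_unitDisk'.mem_nhds hzD) hfac
    have hderiv : deriv g z = (k : ℂ) * z ^ (k - 1) * U z + z ^ k * deriv U z := by
      rw [hev.deriv_eq]
      rw [deriv_fun_mul (differentiableAt_pow k) ((hU z hzD).differentiableAt)]
      simp [deriv_pow_field]
    have hgz : g z = z ^ k * U z := hfac z hzD
    show deriv g z / g z = q z
    rw [hderiv, hgz]
    cases k with
    | zero => simp [q, f1, f2]
    | succ m =>
      have : m + 1 - 1 = m := rfl
      rw [this]
      simp only [q, f1, f2]
      field_simp
      ring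
  -- integrability
  have hc2 : ContinuousOn f2 (sphere (0:ℂ) r) := by
    intro z hz
    have hzD : z ∈ unitDisk := hrD (sphere_subset_closedBall hz)
    exact (((hUd z hzD).differentiableAt.continuousAt).div
      ((hU z hzD).differentiableAt.continuousAt)
      (hUne z (sphere_subset_closedBall hz))).continuousWithinAt
  have hc1 : ContinuousOn f1 (sphere (0:ℂ) r) := by
    intro z hz
    have hz0 : z ≠ 0 := by
      intro h; rw [h] at hz; simp [mem_sphere_iff_norm] at hz; exact hr.ne' hz.symm
    exact (continuousAt_const.div continuousAt_id hz0).continuousWithinAt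
  have hi1 : CircleIntegrable f1 0 r := hc1.circleIntegrable hr.le
  have hi2 : CircleIntegrable f2 0 r := hc2.circleIntegrable hr.le
  have hiq : CircleIntegrable q 0 r := (hc1.add hc2).circleIntegrable hr.le
  -- ∮ f2 = 0 by Cauchy–Goursat
  have h2 : (∮ z in C(0, r), f2 z) = 0 := by
    apply Complex.circleIntegral_eq_zero_of_differentiable_on_off_countable hr.le
      countable_empty
    · intro z hz
      have hzD : z ∈ unitDisk := hrD hz
      exact (((hUd z hzD).differentiableAt.continuousAt).div
        ((hU z hzD).differentiableAt.continuousAt) (hUne z hz)).continuousWithinAt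
    · rintro z ⟨hz, -⟩
      have hzD : z ∈ unitDisk := hrD (ball_subset_closedBall hz)
      exact ((hUd z hzD).differentiableAt).div ((hU z hzD).differentiableAt)
        (hUne z (ball_subset_closedBall hz))
  -- ∮ f1 = 2πik
  have h1 : (∮ z in C(0, r), f1 z) = 2 * Real.pi * Complex.I * k := by
    have hrw : f1 = fun z : ℂ => (k : ℂ) • (z - 0)⁻¹ := by
      funext z; simp [f1, div_eq_mul_inv]
    rw [hrw, circleIntegral.integral_smul,
      circleIntegral.integral_sub_inv_of_mem_ball (by simpa using hr)]
    simp [smul_eq_mul]; ring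
  -- combine
  have hsub : (∮ z in C(0, r), (q z - f2 z)) = (∮ z in C(0, r), q z) - ∮ z in C(0, r), f2 z :=
    circleIntegral.integral_sub hiq hi2
  have hqf : (fun z => q z - f2 z) = f1 := by
    funext z; simp [q]
  rw [hqf] at hsub
  rw [circleIntegral.integral_congr hr.le h_eqOn]
  rw [h1, h2, sub_zero] at hsub
  rw [← hsub]

/-- With forward iterates `F n` converging locally uniformly to a
nonconstant holomorphic self-map `Flim`, the sequence `K n := ord_0 (F n - F n 0)` is
nondecreasing and eventually equal to `K := ord_0 (Flim - Flim 0)`. -/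
theorem stmt_9
    (f F : ℕ → ℂ → ℂ) (Flim : ℂ → ℂ)
    (hf : ∀ n : ℕ, IsHolSelfMap (f (n + 1)))
    (hF0 : ∀ z, F 0 z = z)
    (hFrec : ∀ n z, F (n + 1) z = f (n + 1) (F n z))
    (hFlim : IsHolSelfMap Flim)
    (hconv : TendstoLocallyUniformlyOn F Flim atTop unitDisk)
    (hnc : ∃ z ∈ unitDisk, ∃ w ∈ unitDisk, Flim z ≠ Flim w) :
    Monotone (fun n : ℕ => ordAt (fun z => F (n + 1) z - F (n + 1) 0) 0) ∧
    (∃ N : ℕ, ∀ n ≥ N, ordAt (fun z => F (n + 1) z - F (n + 1) 0) 0 =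
        ordAt (fun z => Flim z - Flim 0) 0) := by
  have hD : IsOpen unitDisk := isOpen_unitDisk'
  have h0D : (0:ℂ) ∈ unitDisk := by simp [unitDisk]
  have hpre : IsPreconnected unitDisk := (convex_ball (0:ℂ) 1).isPreconnected
  -- differentiability and mapsTo of all `F n`
  have hFd : ∀ n, DifferentiableOn ℂ (F n) unitDisk ∧ MapsTo (F n) unitDisk unitDisk := by
    intro n; induction n with
    | zero =>
      constructor
      · exact DifferentiableOn.congr differentiableOn_id fun z _ => (hF0 z)
      · intro z hz; rw [hF0]; exact hz
    | succ n ih =>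
      have hcomp : F (n+1) = (f (n+1)) ∘ (F n) := funext fun z => hFrec n z
      constructor
      · rw [hcomp]; exact (hf n).1.comp ih.1 ih.2
      · rw [hcomp]; exact (hf n).2.comp ih.2
  have hFanal : ∀ n, AnalyticOnNhd ℂ (F n) unitDisk := fun n => (hFd n).1.analyticOnNhd hD
  have hFlimanal : AnalyticOnNhd ℂ Flim unitDisk := hFlim.1.analyticOnNhd hD
  -- pointwise limits
  have hpt : ∀ z ∈ unitDisk, Tendsto (fun n => F n z) atTop (𝓝 (Flim z)) :=
    fun z hz => hconv.tendsto_at hz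
  -- a point where all `F m`, `m ≥ n`, agree with its value at related point: limit transfer
  have hlimeq : ∀ m z, z ∈ unitDisk → F m z = F m 0 → Flim z = Flim 0 := by
    intro m z hz hm
    have hall : ∀ j, m ≤ j → F j z = F j 0 := by
      intro j hj
      induction j, hj using Nat.le_induction with
      | base => exact hm
      | succ j hj ih => rw [hFrec j z, hFrec j 0, ih]
    have h1 : Tendsto (fun n => F n z) atTop (𝓝 (Flim 0)) := by
      apply Tendsto.congr' _ (hpt 0 h0D)
      filter_upwards [eventually_ge_atTop m] with j hj
      exact (hall j hj).symm
    exact tendsto_nhds_unique (hpt z hz) h1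
  obtain ⟨zw, hzwD, ww, hwwD, hzw⟩ := hnc
  have hconst : ∀ m, (∀ z ∈ unitDisk, F m z = F m 0) → False := by
    intro m hm
    exact hzw (by rw [hlimeq m zw hzwD (hm zw hzwD), hlimeq m ww hwwD (hm ww hwwD)])
  -- the difference functions
  have hganal : ∀ n, AnalyticOnNhd ℂ (fun z => F (n+1) z - F (n+1) 0) unitDisk :=
    fun n z hz => ((hFanal (n+1)) z hz).sub analyticAt_const
  have hglimanal : AnalyticOnNhd ℂ (fun z => Flim z - Flim 0) unitDisk :=
    fun z hz => (hFlimanal z hz).sub analyticAt_const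
  -- finite orders
  have hord_ne_top : ∀ n, analyticOrderAt (fun z => F (n+1) z - F (n+1) 0) 0 ≠ ⊤ := by
    intro n htop
    rw [analyticOrderAt_eq_top] at htop
    apply hconst (n+1)
    intro z hz
    have heq := AnalyticOnNhd.eqOn_of_preconnected_of_eventuallyEq (hganal n)
      (fun z _ => analyticAt_const (v := (0:ℂ))) hpre h0D htop hz
    simpa [sub_eq_zero] using heq
  have hlim_ne_top : analyticOrderAt (fun z => Flim z - Flim 0) 0 ≠ ⊤ := by
    intro htop
    rw [analyticOrderAt_eq_top] at htop
    apply hzw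
    have h1 := AnalyticOnNhd.eqOn_of_preconnected_of_eventuallyEq hglimanal
      (fun z _ => analyticAt_const (v := (0:ℂ))) hpre h0D htop hzwD
    have h2 := AnalyticOnNhd.eqOn_of_preconnected_of_eventuallyEq hglimanal
      (fun z _ => analyticAt_const (v := (0:ℂ))) hpre h0D htop hwwD
    simp only [sub_eq_zero] at h1 h2
    rw [h1, h2]
  choose kk hkk using fun n => WithTop.ne_top_iff_exists.mp (hord_ne_top n)
  obtain ⟨K, hK⟩ := WithTop.ne_top_iff_exists.mp hlim_ne_top
  have hord_val : ∀ n, ordAt (fun z => F (n + 1) z - F (n + 1) 0) 0 = ((kk n : ℕ∞)) :=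
    fun n => (ordAt_eq_order (hganal n 0 h0D)).trans (hkk n).symm
  have hord_val_lim : ordAt (fun z => Flim z - Flim 0) 0 = ((K : ℕ∞)) :=
    (ordAt_eq_order (hglimanal 0 h0D)).trans hK.symm
  constructor
  · -- Monotonicity
    have mono_succ : ∀ n, kk n ≤ kk (n+1) := by
      intro n
      obtain ⟨u, huan, hu0, hueq⟩ :=
        ((hganal n 0 h0D).analyticOrderAt_eq_natCast (n := kk n)).mp (hkk n).symm
      have haD : F (n+1) 0 ∈ unitDisk := (hFd (n+1)).2 h0D
      have hh_anal : AnalyticAt ℂ (fun w => f (n+2) w - F (n+2) 0) (F (n+1) 0) :=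
        (((hf (n+1)).1.analyticOnNhd hD) _ haD).sub analyticAt_const
      have hFcont : Tendsto (F (n+1)) (𝓝 0) (𝓝 (F (n+1) 0)) :=
        ((hFanal (n+1)) 0 h0D).continuousAt
      have hcomp : ∀ z, F (n+2) z - F (n+2) 0 = f (n+2) (F (n+1) z) - F (n+2) 0 := by
        intro z; rw [hFrec (n+1) z]
      have hh_ne_top : analyticOrderAt (fun w => f (n+2) w - F (n+2) 0) (F (n+1) 0) ≠ ⊤ := by
        intro htop
        rw [analyticOrderAt_eq_top] at htop
        apply hord_ne_top (n+1)
        rw [analyticOrderAt_eq_top]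
        filter_upwards [hFcont.eventually htop] with z hz
        rw [hcomp z]; exact hz
      obtain ⟨m, hm⟩ := WithTop.ne_top_iff_exists.mp hh_ne_top
      obtain ⟨v, hvan, hv0, hveq⟩ := (hh_anal.analyticOrderAt_eq_natCast (n := m)).mp hm.symm
      have hm1 : 1 ≤ m := by
        rcases Nat.eq_zero_or_pos m with h0 | h1
        · exfalso
          have hself := hveq.self_of_nhds
          rw [h0] at hself
          simp only [pow_zero, one_smul] at hself
          have hha : f (n+2) (F (n+1) 0) - F (n+2) 0 = 0 := by
            rw [← hFrec (n+1) 0, sub_self]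
          rw [hha] at hself
          exact hv0 hself.symm
        · exact h1
      have horder1 : analyticOrderAt (fun z => F (n+1+1) z - F (n+1+1) 0) 0 = ((kk n * m : ℕ) : ℕ∞) := by
        rw [(hganal (n+1) 0 h0D).analyticOrderAt_eq_natCast]
        refine ⟨fun z => u z ^ m * v (F (n+1) z),
          (huan.pow m).mul (hvan.comp_of_eq ((hFanal (n+1)) 0 h0D) rfl), ?_, ?_⟩
        · exact mul_ne_zero (pow_ne_zero m hu0) hv0
        · filter_upwards [hueq, hFcont.eventually hveq] with z h1 h2
          have hgz : F (n+1) z - F (n+1) 0 = (z - 0) ^ (kk n) • u z := h1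
          rw [hcomp z, h2, hgz]
          simp only [smul_eq_mul, sub_zero]
          rw [mul_pow, ← pow_mul]
          ring
      have : kk (n+1) = kk n * m := by
        have h2 := (hkk (n+1)).trans horder1
        exact Nat.cast_inj.mp h2
      rw [this]
      exact Nat.le_mul_of_pos_right _ hm1
    apply monotone_nat_of_le_succ
    intro n
    rw [hord_val n, hord_val (n+1)]
    exact_mod_cast mono_succ n
  · -- Eventual equality
    have hglim_ne : ∀ᶠ z in 𝓝[≠] (0:ℂ), (Flim z - Flim 0) ≠ 0 := by
      rcases (hglimanal 0 h0D).eventually_eq_zero_or_eventually_ne_zero with h | h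
      · exact absurd (analyticOrderAt_eq_top.mpr h) hlim_ne_top
      · exact h
    rw [eventually_nhdsWithin_iff] at hglim_ne
    obtain ⟨ε₀, hε₀, hball⟩ := Metric.eventually_nhds_iff.mp hglim_ne
    set r : ℝ := min (ε₀/2) (2⁻¹) with hrdef
    have hr : 0 < r := lt_min (half_pos hε₀) (by norm_num)
    have hrD : closedBall (0:ℂ) r ⊆ unitDisk := by
      intro z hz
      simp only [unitDisk, mem_ball]
      calc dist z 0 ≤ r := mem_closedBall.mp hz
        _ ≤ 2⁻¹ := min_le_right _ _
        _ < 1 := by norm_num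
    have hrzero : ∀ z ∈ closedBall (0:ℂ) r, z ≠ 0 → (Flim z - Flim 0) ≠ 0 := by
      intro z hz hz0
      apply hball (lt_of_le_of_lt (mem_closedBall.mp hz) ?_) ?_
      · calc r ≤ ε₀/2 := min_le_left _ _
          _ < ε₀ := half_lt_self hε₀
      · simpa using hz0
    have hchain : ∀ n z, z ∈ unitDisk → (F (n+1) z - F (n+1) 0 = 0) → Flim z - Flim 0 = 0 := by
      intro n z hz h
      rw [sub_eq_zero] at h ⊢
      exact hlimeq (n+1) z hz h
    have hsphD : sphere (0:ℂ) r ⊆ unitDisk := sphere_subset_closedBall.trans hrD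
    have hzsph : ∀ z ∈ sphere (0:ℂ) r, z ≠ 0 := by
      intro z hz h
      rw [h] at hz
      simp only [mem_sphere_iff_norm, norm_zero, sub_zero] at hz
      . exact hr.ne' (by simpa using hz.symm)
    have hglim_sph : ∀ z ∈ sphere (0:ℂ) r, Flim z - Flim 0 ≠ 0 :=
      fun z hz => hrzero z (sphere_subset_closedBall hz) (hzsph z hz)
    have hgn_sph : ∀ n, ∀ z ∈ sphere (0:ℂ) r, F (n+1) z - F (n+1) 0 ≠ 0 :=
      fun n z hz h => hglim_sph z hz (hchain n z (hsphD hz) h)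
    have hcompact : IsCompact (sphere (0:ℂ) r) := isCompact_sphere _ _
    have hsph_ne : (sphere (0:ℂ) r).Nonempty := NormedSpace.sphere_nonempty.mpr hr.le
    have hderivFlim_cont : ContinuousOn (deriv Flim) (sphere (0:ℂ) r) := fun z hz =>
      ((hFlimanal.deriv z (hsphD hz)).differentiableAt.continuousAt).continuousWithinAt
    have hglim_cont : ContinuousOn (fun z => Flim z - Flim 0) (sphere (0:ℂ) r) :=
      fun z hz => ((hglimanal z (hsphD hz)).differentiableAt.continuousAt).continuousWithinAt
    obtain ⟨M1, hM1⟩ := hcompact.exists_bound_of_continuousOn hderivFlim_cont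
    obtain ⟨M2, hM2⟩ := hcompact.exists_bound_of_continuousOn hglim_cont
    set M : ℝ := max 1 (max M1 M2) with hMdef
    have hM1' : ∀ z ∈ sphere (0:ℂ) r, ‖deriv Flim z‖ ≤ M := fun z hz =>
      (hM1 z hz).trans ((le_max_left _ _).trans (le_max_right _ _))
    have hM2' : ∀ z ∈ sphere (0:ℂ) r, ‖Flim z - Flim 0‖ ≤ M := fun z hz =>
      (hM2 z hz).trans ((le_max_right _ _).trans (le_max_right _ _))
    have hM : 1 ≤ M := le_max_left _ _
    have hMpos : 0 < M := lt_of_lt_of_le one_pos hM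
    obtain ⟨z₀, hz₀, hmin0⟩ := hcompact.exists_isMinOn hsph_ne
      (continuous_norm.comp_continuousOn hglim_cont)
    have hmin : ∀ z ∈ sphere (0:ℂ) r, ‖Flim z₀ - Flim 0‖ ≤ ‖Flim z - Flim 0‖ :=
      fun z hz => isMinOn_iff.mp hmin0 z hz
    set δ : ℝ := min ‖Flim z₀ - Flim 0‖ 1 with hδdef
    have hδpos : 0 < δ := lt_min (norm_pos_iff.mpr (hglim_sph z₀ hz₀)) one_pos
    have hδ1 : δ ≤ 1 := min_le_right _ _
    have hδlb : ∀ z ∈ sphere (0:ℂ) r, δ ≤ ‖Flim z - Flim 0‖ := fun z hz =>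
      (min_le_left _ _).trans (hmin z hz)
    set ε : ℝ := δ^2 / (8 * M * (r+1)) with hεdef
    have hr1 : (0:ℝ) < r + 1 := by linarith
    have hεpos : 0 < ε := by positivity
    have hεδ : ε ≤ δ/2 := by
      rw [hεdef, div_le_div_iff₀ (by positivity) (by norm_num)]
      have h8 : (8:ℝ) ≤ 8*M*(r+1) := by nlinarith
      have hδδ : δ^2*2 ≤ δ*2 := by nlinarith
      nlinarith [mul_le_mul_of_nonneg_left h8 hδpos.le]
    have hU1 : TendstoUniformlyOn F Flim atTop (sphere (0:ℂ) r) :=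
      (tendstoLocallyUniformlyOn_iff_forall_isCompact hD).mp hconv _ hsphD hcompact
    have hdconv : TendstoLocallyUniformlyOn (deriv ∘ F) (deriv Flim) atTop unitDisk :=
      hconv.deriv (Eventually.of_forall fun n => (hFd n).1) hD
    have hU2 : TendstoUniformlyOn (deriv ∘ F) (deriv Flim) atTop (sphere (0:ℂ) r) :=
      (tendstoLocallyUniformlyOn_iff_forall_isCompact hD).mp hdconv _ hsphD hcompact
    have e1 := Metric.tendstoUniformlyOn_iff.mp hU2 ε hεpos
    have e2 := Metric.tendstoUniformlyOn_iff.mp hU1 (ε/2) (half_pos hεpos)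
    have e3 : ∀ᶠ n in atTop, dist (F n 0) (Flim 0) < ε/2 :=
      Metric.tendsto_nhds.mp (hpt 0 h0D) (ε/2) (half_pos hεpos)
    obtain ⟨N, hN⟩ := eventually_atTop.mp ((e1.and e2).and e3)
    refine ⟨N, fun n hn => ?_⟩
    obtain ⟨⟨h1, h2⟩, h3⟩ := hN (n+1) (le_trans hn (Nat.le_succ n))
    -- integral identity for `F (n+1)`
    obtain ⟨u, huan, hu0, hueq⟩ := ((hganal n 0 h0D).analyticOrderAt_eq_natCast (n := kk n)).mp (hkk n).symm
    obtain ⟨U, hUan, hU0, hUfac⟩ := global_factor (hganal n) huan hu0 hueq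
    have hUne : ∀ z ∈ closedBall (0:ℂ) r, U z ≠ 0 := by
      intro z hz hUz
      by_cases hz0 : z = 0
      · rw [hz0] at hUz; exact hU0 hUz
      · exact (hrzero z hz hz0)
          (hchain n z (hrD hz) (by rw [hUfac z (hrD hz), hUz, mul_zero]))
    have hInt_n : (∮ z in C(0, r),
        deriv (fun w => F (n+1) w - F (n+1) 0) z / (F (n+1) z - F (n+1) 0))
        = 2 * Real.pi * Complex.I * (kk n) := by
      simpa using key_integral hr hrD hUan hUne hUfac
    -- integral identity for `Flim`
    obtain ⟨ul, hulan, hul0, huleq⟩ := ((hglimanal 0 h0D).analyticOrderAt_eq_natCast (n := K)).mp hK.symm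
    obtain ⟨V, hVan, hV0, hVfac⟩ := global_factor hglimanal hulan hul0 huleq
    have hVne : ∀ z ∈ closedBall (0:ℂ) r, V z ≠ 0 := by
      intro z hz hVz
      by_cases hz0 : z = 0
      · rw [hz0] at hVz; exact hV0 hVz
      · exact (hrzero z hz hz0) (by rw [hVfac z (hrD hz), hVz, mul_zero])
    have hInt_lim : (∮ z in C(0, r),
        deriv (fun w => Flim w - Flim 0) z / (Flim z - Flim 0))
        = 2 * Real.pi * Complex.I * K := by
      simpa using key_integral hr hrD hVan hVne hVfac
    -- the integrands
    set φn : ℂ → ℂ :=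
      fun z => deriv (fun w => F (n+1) w - F (n+1) 0) z / (F (n+1) z - F (n+1) 0) with hφndef
    set φl : ℂ → ℂ :=
      fun z => deriv (fun w => Flim w - Flim 0) z / (Flim z - Flim 0) with hφldef
    have hφn_cont : ContinuousOn φn (sphere (0:ℂ) r) := by
      intro z hz
      have hzD := hsphD hz
      exact ((((hganal n).deriv z hzD).differentiableAt.continuousAt).div
        (((hganal n) z hzD).differentiableAt.continuousAt) (hgn_sph n z hz)).continuousWithinAt
    have hφl_cont : ContinuousOn φl (sphere (0:ℂ) r) := by
      intro z hz
      have hzD := hsphD hz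
      exact (((hglimanal.deriv z hzD).differentiableAt.continuousAt).div
        ((hglimanal z hzD).differentiableAt.continuousAt) (hglim_sph z hz)).continuousWithinAt
    -- pointwise bound for the difference of integrands
    have hbound : ∀ z ∈ sphere (0:ℂ) r, ‖φn z - φl z‖ ≤ 1/(2*(r+1)) := by
      intro z hz
      have hzD := hsphD hz
      have han : deriv (fun w => F (n+1) w - F (n+1) 0) z = deriv (F (n+1)) z :=
        deriv_sub_const _
      have hal : deriv (fun w => Flim w - Flim 0) z = deriv Flim z := deriv_sub_const _
      have haan : ‖deriv (F (n+1)) z - deriv Flim z‖ ≤ ε := by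
        have hh := h1 z hz
        rw [dist_comm] at hh
        simpa [Function.comp, dist_eq_norm] using hh.le
      have hbbn : ‖(F (n+1) z - F (n+1) 0) - (Flim z - Flim 0)‖ ≤ ε := by
        have hb1 := (h2 z hz).le
        have hb2 := h3.le
        rw [dist_comm, dist_eq_norm] at hb1
        rw [dist_eq_norm] at hb2
        calc ‖(F (n+1) z - F (n+1) 0) - (Flim z - Flim 0)‖
            = ‖(F (n+1) z - Flim z) - (F (n+1) 0 - Flim 0)‖ := by ring_nf
          _ ≤ ‖F (n+1) z - Flim z‖ + ‖F (n+1) 0 - Flim 0‖ := norm_sub_le _ _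
          _ ≤ ε/2 + ε/2 := add_le_add hb1 hb2
          _ = ε := add_halves ε
      have hbδ : δ ≤ ‖Flim z - Flim 0‖ := hδlb z hz
      have hbnδ : δ/2 ≤ ‖F (n+1) z - F (n+1) 0‖ := by
        have h5 : ‖Flim z - Flim 0‖ - ‖F (n+1) z - F (n+1) 0‖
            ≤ ‖(F (n+1) z - F (n+1) 0) - (Flim z - Flim 0)‖ := by
          rw [norm_sub_rev (F (n+1) z - F (n+1) 0) (Flim z - Flim 0)]
          exact norm_sub_norm_le _ _
        linarith [hεδ, hbbn]
      have hb0 : (Flim z - Flim 0) ≠ 0 := hglim_sph z hz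
      have hbn0 : (F (n+1) z - F (n+1) 0) ≠ 0 := hgn_sph n z hz
      have haM : ‖deriv Flim z‖ ≤ M := hM1' z hz
      have hbM : ‖Flim z - Flim 0‖ ≤ M := hM2' z hz
      have key : φn z - φl z =
          (deriv (F (n+1)) z * (Flim z - Flim 0) - (F (n+1) z - F (n+1) 0) * deriv Flim z)
            / ((F (n+1) z - F (n+1) 0) * (Flim z - Flim 0)) := by
        rw [hφndef, hφldef]
        simp only []
        rw [han, hal, div_sub_div _ _ hbn0 hb0]
      have hnum : ‖deriv (F (n+1)) z * (Flim z - Flim 0)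
          - (F (n+1) z - F (n+1) 0) * deriv Flim z‖ ≤ ε*M + M*ε := by
        have hrw : deriv (F (n+1)) z * (Flim z - Flim 0)
            - (F (n+1) z - F (n+1) 0) * deriv Flim z
            = (deriv (F (n+1)) z - deriv Flim z) * (Flim z - Flim 0)
              + deriv Flim z * ((Flim z - Flim 0) - (F (n+1) z - F (n+1) 0)) := by ring
        rw [hrw]
        calc ‖_ + _‖ ≤ ‖(deriv (F (n+1)) z - deriv Flim z) * (Flim z - Flim 0)‖
              + ‖deriv Flim z * ((Flim z - Flim 0) - (F (n+1) z - F (n+1) 0))‖ := norm_add_le _ _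
          _ = ‖deriv (F (n+1)) z - deriv Flim z‖ * ‖Flim z - Flim 0‖
              + ‖deriv Flim z‖ * ‖(Flim z - Flim 0) - (F (n+1) z - F (n+1) 0)‖ := by
                rw [norm_mul, norm_mul]
          _ ≤ ε*M + M*ε := by
              apply add_le_add
              · exact mul_le_mul haan hbM (norm_nonneg _) hεpos.le
              · refine mul_le_mul haM ?_ (norm_nonneg _) hMpos.le
                rw [norm_sub_rev]
                exact hbbn
      have hden : (δ/2)*δ ≤ ‖(F (n+1) z - F (n+1) 0) * (Flim z - Flim 0)‖ := by
        rw [norm_mul]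
        exact mul_le_mul hbnδ hbδ hδpos.le (norm_nonneg _)
      have hden_pos : (0:ℝ) < (δ/2)*δ := by positivity
      have hmain : ‖φn z - φl z‖ ≤ (ε*M + M*ε)/((δ/2)*δ) := by
        rw [key, norm_div]
        exact div_le_div₀ (by positivity) hnum hden_pos hden
      calc ‖φn z - φl z‖ ≤ (ε*M + M*ε)/((δ/2)*δ) := hmain
        _ = 1/(2*(r+1)) := by
            rw [hεdef]
            field_simp
            ring
    -- conclude
    have hsubint : (∮ z in C(0, r), (φn z - φl z))
        = (∮ z in C(0, r), φn z) - ∮ z in C(0, r), φl z :=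
      circleIntegral.integral_sub (hφn_cont.circleIntegrable hr.le)
        (hφl_cont.circleIntegrable hr.le)
    have hnorm : ‖(∮ z in C(0, r), φn z) - ∮ z in C(0, r), φl z‖
        ≤ 2 * Real.pi * r * (1/(2*(r+1))) := by
      rw [← hsubint]
      exact circleIntegral.norm_integral_le_of_norm_le_const hr.le hbound
    have hIn' : (∮ z in C(0, r), φn z) = 2 * Real.pi * Complex.I * (kk n) := hInt_n
    have hIl' : (∮ z in C(0, r), φl z) = 2 * Real.pi * Complex.I * K := hInt_lim
    rw [hIn', hIl'] at hnorm
    rw [hord_val n, hord_val_lim]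
    have hkkK : kk n = K := by
      by_contra hne
      have habs : ‖(2*Real.pi*Complex.I*(kk n) : ℂ) - 2*Real.pi*Complex.I*K‖
          = 2*Real.pi * ‖((kk n : ℂ)) - (K:ℂ)‖ := by
        rw [← mul_sub, norm_mul]
        congr 1
        simp [map_mul, Complex.norm_I, Complex.norm_real,
          abs_of_pos Real.pi_pos]
      have hint : (1:ℝ) ≤ ‖((kk n : ℂ)) - (K:ℂ)‖ := by
        have hz2 : ((kk n : ℂ)) - (K:ℂ) = (((kk n : ℤ) - (K:ℤ) : ℤ) : ℂ) := by push_cast; ring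
        have hzZ : ((kk n : ℤ) - (K:ℤ)) ≠ 0 :=
          sub_ne_zero.mpr (fun h => hne (by exact_mod_cast h))
        have h6 := Int.one_le_abs hzZ
        rw [hz2, Complex.norm_intCast]
        exact_mod_cast h6
      have hlb : 2*Real.pi ≤ ‖(2*Real.pi*Complex.I*(kk n) : ℂ) - 2*Real.pi*Complex.I*K‖ := by
        rw [habs]
        calc 2*Real.pi = 2*Real.pi*1 := (mul_one _).symm
          _ ≤ 2*Real.pi * ‖((kk n : ℂ)) - (K:ℂ)‖ :=
              mul_le_mul_of_nonneg_left hint (by positivity)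
      have hub : 2*Real.pi*r*(1/(2*(r+1))) < 2*Real.pi := by
        rw [mul_one_div, div_lt_iff₀ (by positivity)]
        exact mul_lt_mul_of_pos_left (by linarith) (by positivity)
      linarith
    rw [hkkK]
end
end

section
/- Let (f_n)_{n≥1} be a sequence of holomorphic self-maps of the unit disk 𝔻 whose forward iterates F_n := f_n ∘ ⋯ ∘ f_1 converge locally uniformly on 𝔻 to a nonconstant holomorphic self-map F of 𝔻. Then for each N ∈ ℕ there exists a nonconstant holomorphic self-map H_N of 𝔻 such that F = H_N ∘ F_N; moreover, the maps h_{N,n} := f_{N+n} ∘ ⋯ ∘ f_{N+1} converge locally uniformly on 𝔻 to H_N as n → ∞. -/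
open Filter Metric Set
open Topology

noncomputable section

lemma vitali_coeff_cauchy
    (g : ℕ → ℂ → ℂ) (hg : ∀ n, DifferentiableOn ℂ (g n) unitDisk)
    (hb : ∀ n, ∀ z ∈ unitDisk, ‖g n z‖ ≤ 1)
    {a : ℂ} {r : ℝ} (hr : 0 < r) (hsub : closedBall a r ⊆ unitDisk)
    (hc : ∀ w ∈ sphere a r, CauchySeq fun n => g n w) (k : ℕ) :
    CauchySeq fun n => (cauchyPowerSeries (g n) a r).coeff k := by
  have hmem : ∀ θ : ℝ, circleMap a r θ ∈ unitDisk := fun θ =>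
    hsub (sphere_subset_closedBall (circleMap_mem_sphere a hr.le θ))
  -- limit function on the sphere
  have hφ : ∀ θ : ℝ, ∃ L : ℂ, Tendsto (fun n => g n (circleMap a r θ)) atTop (𝓝 L) := by
    intro θ
    exact cauchySeq_tendsto_of_complete (hc _ (circleMap_mem_sphere a hr.le θ))
  choose φ hφ using hφ
  -- the integrand
  set G : ℕ → ℝ → ℂ := fun n θ =>
    deriv (circleMap a r) θ •
      ((circleMap a r θ - a)⁻¹ ^ k • ((circleMap a r θ - a)⁻¹ • g n (circleMap a r θ))) with hG
  have hGcont : ∀ n, Continuous (G n) := by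
    intro n
    have h1 : Continuous fun θ => circleMap a r θ - a := (continuous_circleMap a r).sub continuous_const
    have h2 : ∀ θ, circleMap a r θ - a ≠ 0 := fun θ => sub_ne_zero.2 (circleMap_ne_center hr.ne')
    have h3 : Continuous fun θ => g n (circleMap a r θ) :=
      (hg n).continuousOn.comp_continuous (continuous_circleMap a r) hmem
    have h4 : Continuous fun θ => deriv (circleMap a r) θ := by
      simp only [deriv_circleMap]
      exact (continuous_circleMap 0 r).mul continuous_const
    exact h4.smul (((h1.inv₀ h2).pow k).smul ((h1.inv₀ h2).smul h3))
  have hGtend : ∀ θ : ℝ, Tendsto (fun n => G n θ) atTop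
      (𝓝 (deriv (circleMap a r) θ •
        ((circleMap a r θ - a)⁻¹ ^ k • ((circleMap a r θ - a)⁻¹ • φ θ)))) := by
    intro θ
    exact (((hφ θ).const_smul _).const_smul _).const_smul _
  have hGbound : ∀ n θ, ‖G n θ‖ ≤ r⁻¹ ^ k := by
    intro n θ
    have h0 : circleMap a r θ - a = circleMap 0 r θ := circleMap_sub_center a r θ
    have h5 : ‖g n (circleMap a r θ)‖ ≤ 1 := hb n _ (hmem θ)
    rw [hG]
    simp only [deriv_circleMap, h0, norm_smul, norm_pow, norm_inv,
      norm_circleMap_zero, norm_mul, Complex.norm_I, mul_one, abs_of_pos hr]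
    calc r * (r⁻¹ ^ k * (r⁻¹ * ‖g n (circleMap a r θ)‖))
        ≤ r * (r⁻¹ ^ k * (r⁻¹ * 1)) := by
          gcongr
      _ = r⁻¹ ^ k * (r * r⁻¹) := by ring
      _ = r⁻¹ ^ k := by rw [mul_inv_cancel₀ hr.ne', mul_one]
  have hint : Tendsto (fun n => ∫ θ in (0 : ℝ)..2 * Real.pi, G n θ) atTop
      (𝓝 (∫ θ in (0 : ℝ)..2 * Real.pi, deriv (circleMap a r) θ •
        ((circleMap a r θ - a)⁻¹ ^ k • ((circleMap a r θ - a)⁻¹ • φ θ)))) := by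
    apply intervalIntegral.tendsto_integral_filter_of_dominated_convergence (fun _ => r⁻¹ ^ k)
    · exact Eventually.of_forall fun n => (hGcont n).aestronglyMeasurable
    · exact Eventually.of_forall fun n => MeasureTheory.ae_of_all _ fun θ _ => hGbound n θ
    · exact intervalIntegrable_const
    · exact MeasureTheory.ae_of_all _ fun θ _ => hGtend θ
  have hcoeff : ∀ n, (cauchyPowerSeries (g n) a r).coeff k =
      (2 * Real.pi * Complex.I : ℂ)⁻¹ • ∫ θ in (0 : ℝ)..2 * Real.pi, G n θ := by
    intro n
    simp only [cauchyPowerSeries, FormalMultilinearSeries.coeff, circleIntegral,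
      ContinuousMultilinearMap.mkPiRing_apply, Pi.one_apply, Finset.prod_const, one_pow, one_smul, hG]
  simp only [hcoeff]
  exact ((hint.const_smul _).cauchySeq)

lemma vitali_local
    (g : ℕ → ℂ → ℂ) (hg : ∀ n, DifferentiableOn ℂ (g n) unitDisk)
    (hb : ∀ n, ∀ z ∈ unitDisk, ‖g n z‖ ≤ 1)
    {a : ℂ} {ε : ℝ} (hε : 0 < ε) (hsub : ball a ε ⊆ unitDisk)
    (hc : ∀ w ∈ ball a ε, CauchySeq fun n => g n w)
    {ρ : ℝ} (hρ0 : 0 ≤ ρ) (hρ : ρ < 1 - ‖a‖) :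
    UniformCauchySeqOn g atTop (closedBall a ρ) := by
  have ha : ‖a‖ < 1 := by
    have : a ∈ ball a ε := mem_ball_self hε
    have := hsub this
    simpa [unitDisk, mem_ball, dist_eq_norm] using this
  -- big radius R
  set R : ℝ := (ρ + (1 - ‖a‖)) / 2 with hRdef
  have hρR : ρ < R := by rw [hRdef]; linarith
  have hR1 : R < 1 - ‖a‖ := by rw [hRdef]; linarith
  have hR0 : 0 < R := lt_of_le_of_lt hρ0 hρR
  have hRlt1 : R < 1 := by linarith [norm_nonneg a]
  have hRsub : closedBall a R ⊆ unitDisk := by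
    intro z hz
    simp only [mem_closedBall, dist_eq_norm] at hz
    have : ‖z‖ ≤ ‖z - a‖ + ‖a‖ := by
      calc ‖z‖ = ‖(z - a) + a‖ := by ring_nf
        _ ≤ ‖z - a‖ + ‖a‖ := norm_add_le _ _
    simp only [unitDisk, mem_ball, dist_zero_right]
    linarith
  -- small radius r
  set r : ℝ := min (ε / 2) (R / 2) with hrdef
  have hr0 : 0 < r := lt_min (by linarith) (by linarith)
  have hrε : r < ε := lt_of_le_of_lt (min_le_left _ _) (by linarith)
  have hrsub : closedBall a r ⊆ ball a ε := closedBall_subset_ball hrε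
  -- power series at both radii
  have hbig : ∀ n, HasFPowerSeriesOnBall (g n) (cauchyPowerSeries (g n) a R) a
      (Real.toNNReal R) := by
    intro n
    have := ((hg n).mono (by simpa [Real.coe_toNNReal R hR0.le] using hRsub)).hasFPowerSeriesOnBall
      (R := Real.toNNReal R) (by simpa using hR0)
    simpa [Real.coe_toNNReal R hR0.le] using this
  have hsmall : ∀ n, HasFPowerSeriesOnBall (g n) (cauchyPowerSeries (g n) a r) a
      (Real.toNNReal r) := by
    intro n
    have := ((hg n).mono (by
      simpa [Real.coe_toNNReal r hr0.le] using (hrsub.trans hsub))).hasFPowerSeriesOnBall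
      (R := Real.toNNReal r) (by simpa using hr0)
    simpa [Real.coe_toNNReal r hr0.le] using this
  have hpeq : ∀ n, cauchyPowerSeries (g n) a r = cauchyPowerSeries (g n) a R := fun n =>
    (hsmall n).hasFPowerSeriesAt.eq_formalMultilinearSeries (hbig n).hasFPowerSeriesAt
  set c : ℕ → ℕ → ℂ := fun n k => (cauchyPowerSeries (g n) a R).coeff k with hcdef
  -- coefficients form Cauchy sequences
  have hcc : ∀ k, CauchySeq fun n => c n k := by
    intro k
    have := vitali_coeff_cauchy g hg hb hr0 (hrsub.trans hsub)
      (fun w hw => hc w (sphere_subset_closedBall.trans hrsub hw)) k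
    simpa only [hcdef, hpeq] using this
  -- coefficient bounds
  have hcb : ∀ n k, ‖c n k‖ ≤ R⁻¹ ^ k := by
    intro n k
    have h1 : ‖c n k‖ = ‖cauchyPowerSeries (g n) a R k‖ :=
      FormalMultilinearSeries.norm_apply_eq_norm_coef.symm
    rw [h1]
    refine (norm_cauchyPowerSeries_le _ _ _ _).trans ?_
    rw [abs_of_pos hR0]
    have hint : (∫ θ : ℝ in (0)..2 * Real.pi, ‖g n (circleMap a R θ)‖) ≤
        ∫ θ : ℝ in (0)..2 * Real.pi, (1 : ℝ) := by
      apply intervalIntegral.integral_mono_on Real.two_pi_pos.le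
      · apply Continuous.intervalIntegrable
        exact ((hg n).continuousOn.comp_continuous (continuous_circleMap a R)
          (fun θ => hRsub (sphere_subset_closedBall (circleMap_mem_sphere a hR0.le θ)))).norm
      · exact intervalIntegrable_const
      · intro θ _
        exact hb n _ (hRsub (sphere_subset_closedBall (circleMap_mem_sphere a hR0.le θ)))
    have : (2 * Real.pi)⁻¹ * ∫ θ : ℝ in (0)..2 * Real.pi, ‖g n (circleMap a R θ)‖ ≤ 1 := by
      rw [intervalIntegral.integral_const, sub_zero, smul_eq_mul, mul_one] at hint
      calc (2 * Real.pi)⁻¹ * ∫ θ : ℝ in (0)..2 * Real.pi, ‖g n (circleMap a R θ)‖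
          ≤ (2 * Real.pi)⁻¹ * (2 * Real.pi) := by
            gcongr
        _ = 1 := inv_mul_cancel₀ Real.two_pi_pos.ne'
    calc ((2 * Real.pi)⁻¹ * ∫ θ : ℝ in (0)..2 * Real.pi, ‖g n (circleMap a R θ)‖) * R⁻¹ ^ k
        ≤ 1 * R⁻¹ ^ k := by
          gcongr
      _ = R⁻¹ ^ k := one_mul _
  -- series representation on the closed ball
  have hrep : ∀ n, ∀ z ∈ closedBall a ρ,
      HasSum (fun k => (z - a) ^ k • c n k) (g n z) := by
    intro n z hz
    have hzρ' : ‖z - a‖ ≤ ρ := by simpa [dist_eq_norm] using hz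
    have hzmem : z - a ∈ Metric.eball (0 : ℂ) (Real.toNNReal R) := by
      rw [show ((Real.toNNReal R : ENNReal)) = ENNReal.ofReal R from rfl, Metric.emetric_ball]
      simp only [mem_ball, dist_zero_right]
      exact lt_of_le_of_lt hzρ' hρR
    have := (hbig n).hasSum hzmem
    simp only [FormalMultilinearSeries.apply_eq_pow_smul_coeff, add_sub_cancel] at this
    exact this
  -- now the epsilon argument
  rw [Metric.uniformCauchySeqOn_iff]
  intro δ hδ
  set t : ℝ := ρ * R⁻¹ with htdef
  have ht0 : 0 ≤ t := mul_nonneg hρ0 (inv_nonneg.2 hR0.le)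
  have ht1 : t < 1 := by
    rw [htdef, ← div_eq_mul_inv, div_lt_one hR0]
    exact hρR
  -- choose K with tail small
  have htail : Tendsto (fun K : ℕ => 2 * t ^ K * (1 - t)⁻¹) atTop (𝓝 0) := by
    have := (tendsto_pow_atTop_nhds_zero_of_lt_one ht0 ht1).const_mul (2 : ℝ)
    simpa using this.mul_const (1 - t)⁻¹
  obtain ⟨K, hK⟩ := (htail.eventually (eventually_lt_nhds (by linarith : (0:ℝ) < δ / 2))).exists
  -- choose M uniform over k < K
  have hMk : ∀ k : ℕ, ∃ M : ℕ, ∀ m ≥ M, ∀ n ≥ M,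
      dist (c m k) (c n k) < δ / (2 * (K + 1)) := by
    intro k
    have := Metric.cauchySeq_iff.1 (hcc k) (δ / (2 * (K + 1)))
      (by positivity)
    obtain ⟨M, hM⟩ := this
    exact ⟨M, fun m hm n hn => hM m hm n hn⟩
  choose Mk hMk using hMk
  set M : ℕ := (Finset.range K).sup Mk with hMdef
  refine ⟨M, fun m hm n hn z hz => ?_⟩
  -- sum bound
  have hs := (hrep m z hz).sub (hrep n z hz)
  have hs' : HasSum (fun k => (z - a) ^ k • (c m k - c n k)) (g m z - g n z) := by
    simpa [smul_sub, mul_sub] using hs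
  have hzρ : ‖z - a‖ ≤ ρ := by simpa [dist_eq_norm] using hz
  -- majorant
  set w : ℕ → ℝ := fun k => if k < K then δ / (2 * (K + 1)) else 0 with hwdef
  set v : ℕ → ℝ := fun k => if k < K then 0 else 2 * t ^ k with hvdef
  have hwsum : HasSum w ((K : ℝ) * (δ / (2 * (K + 1)))) := by
    have h0 : ∀ b ∉ Finset.range K, w b = 0 := by
      intro b hb
      simp only [hwdef]
      rw [if_neg]
      simpa using hb
    have hws := hasSum_sum_of_ne_finset_zero (L := SummationFilter.unconditional ℕ) h0
    have hsum : ∑ i ∈ Finset.range K, w i = (K : ℝ) * (δ / (2 * (K + 1))) := by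
      rw [Finset.sum_congr rfl (fun i hi => by
        simp only [hwdef]; exact if_pos (Finset.mem_range.1 hi))]
      simp [Finset.sum_const, nsmul_eq_mul]
    rwa [hsum] at hws
  have hvsum : HasSum v (2 * t ^ K * (1 - t)⁻¹) := by
    rw [← hasSum_nat_add_iff' K]
    have h1 : ∀ i : ℕ, v (i + K) = (2 * t ^ K) * t ^ i := by
      intro i
      simp only [hvdef]
      rw [if_neg (by omega)]
      ring
    have h2 : ∑ i ∈ Finset.range K, v i = 0 := by
      apply Finset.sum_eq_zero
      intro i hi
      simp [hvdef, Finset.mem_range.1 hi]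
    rw [h2, sub_zero]
    simpa only [h1] using (hasSum_geometric_of_lt_one ht0 ht1).mul_left (2 * t ^ K)
  have hbound : ∀ k, ‖(z - a) ^ k • (c m k - c n k)‖ ≤ w k + v k := by
    intro k
    rw [norm_smul, norm_pow]
    by_cases hk : k < K
    · have h1 : ‖c m k - c n k‖ ≤ δ / (2 * (K + 1)) := by
        have := hMk k m (le_trans (Finset.le_sup (Finset.mem_range.2 hk)) hm)
          n (le_trans (Finset.le_sup (Finset.mem_range.2 hk)) hn)
        rw [dist_eq_norm] at this
        exact this.le
      have h2 : ‖z - a‖ ^ k ≤ 1 := pow_le_one₀ (norm_nonneg _) (hzρ.trans (by linarith))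
      calc ‖z - a‖ ^ k * ‖c m k - c n k‖ ≤ 1 * (δ / (2 * (K + 1))) := by
            apply mul_le_mul h2 h1 (norm_nonneg _) zero_le_one
        _ = w k + v k := by simp [hwdef, hvdef, hk]
    · have h1 : ‖c m k - c n k‖ ≤ 2 * R⁻¹ ^ k := by
        calc ‖c m k - c n k‖ ≤ ‖c m k‖ + ‖c n k‖ := norm_sub_le _ _
          _ ≤ R⁻¹ ^ k + R⁻¹ ^ k := add_le_add (hcb m k) (hcb n k)
          _ = 2 * R⁻¹ ^ k := by ring
      calc ‖z - a‖ ^ k * ‖c m k - c n k‖ ≤ ρ ^ k * (2 * R⁻¹ ^ k) := by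
            apply mul_le_mul (pow_le_pow_left₀ (norm_nonneg _) hzρ k) h1 (norm_nonneg _)
              (pow_nonneg hρ0 k)
        _ = 2 * t ^ k := by rw [htdef, mul_pow]; ring
        _ = w k + v k := by simp [hwdef, hvdef, hk]
  have hnorm : ‖g m z - g n z‖ ≤ (K : ℝ) * (δ / (2 * (K + 1))) + 2 * t ^ K * (1 - t)⁻¹ := by
    rw [← hs'.tsum_eq]
    exact tsum_of_norm_bounded (hwsum.add hvsum) hbound
  rw [dist_eq_norm]
  have hhalf : (K : ℝ) * (δ / (2 * (K + 1))) ≤ δ / 2 := by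
    have heq : (K : ℝ) * (δ / (2 * (K + 1))) = δ / 2 * ((K : ℝ) / (K + 1)) := by
      field_simp
    rw [heq]
    have h2 : (K : ℝ) / (K + 1) ≤ 1 := by
      rw [div_le_one (by positivity)]
      linarith
    calc δ / 2 * ((K : ℝ) / (K + 1)) ≤ δ / 2 * 1 := by
          apply mul_le_mul_of_nonneg_left h2 (by linarith)
      _ = δ / 2 := mul_one _
  calc ‖g m z - g n z‖ ≤ (K : ℝ) * (δ / (2 * (K + 1))) + 2 * t ^ K * (1 - t)⁻¹ := hnorm
    _ < δ / 2 + δ / 2 := by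
        apply add_lt_add_of_le_of_lt hhalf hK
    _ = δ := by ring

lemma vitali_global
    (g : ℕ → ℂ → ℂ) (hg : ∀ n, DifferentiableOn ℂ (g n) unitDisk)
    (hb : ∀ n, ∀ z ∈ unitDisk, ‖g n z‖ ≤ 1)
    {U : Set ℂ} (hU : IsOpen U) (hUne : U.Nonempty) (hUsub : U ⊆ unitDisk)
    (hc : ∀ w ∈ U, CauchySeq fun n => g n w) :
    ∀ a ∈ unitDisk, ∀ ρ : ℝ, 0 ≤ ρ → ρ < 1 - ‖a‖ →
      UniformCauchySeqOn g atTop (closedBall a ρ) := by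
  set S : Set ℂ := {a | ∃ ε : ℝ, 0 < ε ∧ ball a ε ⊆ unitDisk ∧
    ∀ w ∈ ball a ε, CauchySeq fun n => g n w} with hSdef
  have hSopen : IsOpen S := by
    rw [Metric.isOpen_iff]
    rintro a ⟨ε, hε, hball, hcau⟩
    refine ⟨ε, hε, fun b hb' => ?_⟩
    refine ⟨ε - dist b a, by simp only [mem_ball] at hb'; linarith, ?_, ?_⟩
    · exact (ball_subset_ball' (by linarith)).trans hball
    · intro w hw
      exact hcau w (ball_subset_ball' (le_of_eq (by ring)) hw)
  have hSsub : S ⊆ unitDisk := by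
    rintro a ⟨ε, hε, hball, -⟩
    exact hball (mem_ball_self hε)
  have hnorm_lt : ∀ a ∈ unitDisk, ‖a‖ < 1 := by
    intro a haa
    simpa [unitDisk, mem_ball, dist_zero_right] using haa
  have hkey : ∀ a ∈ S, ∀ ρ : ℝ, 0 ≤ ρ → ρ < 1 - ‖a‖ →
      UniformCauchySeqOn g atTop (closedBall a ρ) := by
    rintro a ⟨ε, hε, hball, hcau⟩ ρ hρ0 hρ
    exact vitali_local g hg hb hε hball hcau hρ0 hρ
  -- closure property
  have hclos : closure S ∩ unitDisk ⊆ S := by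
    rintro a ⟨hacl, haD⟩
    have ha1 : ‖a‖ < 1 := hnorm_lt a haD
    obtain ⟨b, hbS, hab⟩ := Metric.mem_closure_iff.1 hacl ((1 - ‖a‖) / 3) (by linarith)
    have hb1 : ‖b‖ ≤ ‖a‖ + dist a b := by
      calc ‖b‖ = ‖a + (b - a)‖ := by ring_nf
        _ ≤ ‖a‖ + ‖b - a‖ := norm_add_le _ _
        _ = ‖a‖ + dist a b := by rw [dist_eq_norm']
    have hρb : (1 - ‖a‖) / 2 < 1 - ‖b‖ := by linarith
    have hUC := hkey b hbS ((1 - ‖a‖) / 2) (by linarith) hρb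
    set ε₀ : ℝ := (1 - ‖a‖) / 12 with hε₀
    refine ⟨ε₀, by linarith, ?_, ?_⟩
    · intro w hw
      simp only [mem_ball, dist_eq_norm] at hw
      simp only [unitDisk, mem_ball, dist_zero_right]
      calc ‖w‖ = ‖a + (w - a)‖ := by ring_nf
        _ ≤ ‖a‖ + ‖w - a‖ := norm_add_le _ _
        _ < ‖a‖ + ε₀ := by linarith
        _ < 1 := by rw [hε₀]; linarith
    · intro w hw
      have hwb : w ∈ closedBall b ((1 - ‖a‖) / 2) := by
        simp only [mem_closedBall]
        calc dist w b ≤ dist w a + dist a b := dist_triangle _ _ _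
          _ ≤ ε₀ + (1 - ‖a‖) / 3 := by
              apply add_le_add _ hab.le
              simpa [mem_ball] using hw.le
          _ ≤ (1 - ‖a‖) / 2 := by rw [hε₀]; linarith
      exact hUC.cauchySeq hwb
  -- connectedness
  have hpre : IsPreconnected unitDisk := (convex_ball (0 : ℂ) 1).isPreconnected
  have hDS : unitDisk ⊆ S := by
    apply hpre.subset_of_closure_inter_subset hSopen
    · obtain ⟨u, hu⟩ := hUne
      obtain ⟨ε, hε, hball⟩ := Metric.isOpen_iff.1 hU u hu
      exact ⟨u, hUsub hu, ⟨ε, hε, hball.trans hUsub, fun w hw => hc w (hball hw)⟩⟩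
    · exact hclos
  intro a ha ρ hρ0 hρ
  exact hkey a (hDS ha) ρ hρ0 hρ

/-- If the forward iterates `F n` of holomorphic self-maps `(f n)` of the
unit disk converge locally uniformly to a nonconstant holomorphic self-map `Flim`, then for
each `N` there is a nonconstant holomorphic self-map `H` with `Flim = H ∘ F N` on the disk,
and the partial compositions `h N n = f (N+n) ∘ ⋯ ∘ f (N+1)` converge locally uniformly on
the disk to `H`. -/
theorem stmt_11
    (f F : ℕ → ℂ → ℂ) (Flim : ℂ → ℂ) (h : ℕ → ℕ → ℂ → ℂ)
    (hf : ∀ n : ℕ, IsHolSelfMap (f (n + 1)))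
    (hF0 : ∀ z, F 0 z = z)
    (hFrec : ∀ n z, F (n + 1) z = f (n + 1) (F n z))
    (hFlim : IsHolSelfMap Flim)
    (hconv : TendstoLocallyUniformlyOn F Flim atTop unitDisk)
    (hnc : ∃ z ∈ unitDisk, ∃ w ∈ unitDisk, Flim z ≠ Flim w)
    (hh0 : ∀ N z, h N 0 z = z)
    (hhrec : ∀ N n z, h N (n + 1) z = f (N + n + 1) (h N n z)) :
    ∀ N : ℕ, ∃ H : ℂ → ℂ, IsHolSelfMap H ∧
      (∃ z ∈ unitDisk, ∃ w ∈ unitDisk, H z ≠ H w) ∧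
      (∀ z ∈ unitDisk, Flim z = H (F N z)) ∧
      TendstoLocallyUniformlyOn (fun n : ℕ => h N n) H atTop unitDisk := by
  have hDopen : IsOpen unitDisk := isOpen_ball
  have hnormlt : ∀ z ∈ unitDisk, ‖z‖ < 1 := fun z hz => by
    simpa [unitDisk, mem_ball, dist_zero_right] using hz
  have hmem_of_norm : ∀ z : ℂ, ‖z‖ < 1 → z ∈ unitDisk := fun z hz => by
    simpa [unitDisk, mem_ball, dist_zero_right] using hz
  intro N
  -- each h N n is a holomorphic self-map
  have hself : ∀ n : ℕ, IsHolSelfMap (h N n) := by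
    intro n
    induction n with
    | zero =>
      have : h N 0 = fun z => z := funext (hh0 N)
      rw [this]
      exact ⟨differentiableOn_id, mapsTo_id _⟩
    | succ n ih =>
      have heq : h N (n + 1) = fun z => f (N + n + 1) (h N n z) := funext (hhrec N n)
      rw [heq]
      obtain ⟨hd, hm⟩ := ih
      obtain ⟨hd', hm'⟩ := hf (N + n)
      exact ⟨hd'.comp hd hm, hm'.comp hm⟩
  -- each F n is a holomorphic self-map
  have hFself : ∀ n : ℕ, IsHolSelfMap (F n) := by
    intro n
    induction n with
    | zero =>
      have : F 0 = fun z => z := funext hF0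
      rw [this]
      exact ⟨differentiableOn_id, mapsTo_id _⟩
    | succ n ih =>
      have heq : F (n + 1) = fun z => f (n + 1) (F n z) := funext (hFrec n)
      rw [heq]
      obtain ⟨hd, hm⟩ := ih
      obtain ⟨hd', hm'⟩ := hf n
      exact ⟨hd'.comp hd hm, hm'.comp hm⟩
  -- key composition identity
  have hkey : ∀ n z, F (N + n) z = h N n (F N z) := by
    intro n
    induction n with
    | zero => intro z; rw [Nat.add_zero, hh0]
    | succ n ih =>
      intro z
      rw [← Nat.add_assoc, hFrec (N + n) z, ih z, hhrec N n]
  -- pointwise convergence of h N n (F N z) to Flim z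
  have hpt : ∀ z ∈ unitDisk, Tendsto (fun n => h N n (F N z)) atTop (𝓝 (Flim z)) := by
    intro z hz
    have h1 : Tendsto (fun n => F n z) atTop (𝓝 (Flim z)) := hconv.tendsto_at hz
    have h2 : Tendsto (fun n => F (n + N) z) atTop (𝓝 (Flim z)) :=
      h1.comp (tendsto_add_atTop_nat N)
    have h3 : (fun n => F (n + N) z) = fun n => h N n (F N z) := by
      funext n
      rw [Nat.add_comm n N, hkey n z]
    rwa [h3] at h2
  -- F N is nonconstant
  obtain ⟨z₀, hz₀, w₀, hw₀, hzw⟩ := hnc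
  have hFNne : F N z₀ ≠ F N w₀ := by
    intro heq
    apply hzw
    have h1 := hpt z₀ hz₀
    have h2 := hpt w₀ hw₀
    rw [heq] at h1
    exact tendsto_nhds_unique h1 h2
  -- the image of the disk under F N is open
  have hpre : IsPreconnected unitDisk := (convex_ball (0 : ℂ) 1).isPreconnected
  have himopen : IsOpen (F N '' unitDisk) := by
    have han : AnalyticOnNhd ℂ (F N) unitDisk := (hFself N).1.analyticOnNhd hDopen
    rcases han.is_constant_or_isOpen hpre with hconst | hopen
    · obtain ⟨w, hw⟩ := hconst
      exact absurd ((hw z₀ hz₀).trans (hw w₀ hw₀).symm) hFNne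
    · exact hopen unitDisk Subset.rfl hDopen
  have himne : (F N '' unitDisk).Nonempty := ⟨F N z₀, mem_image_of_mem _ hz₀⟩
  have himsub : F N '' unitDisk ⊆ unitDisk := image_subset_iff.2 (hFself N).2
  -- bound
  have hbnd : ∀ n, ∀ z ∈ unitDisk, ‖h N n z‖ ≤ 1 :=
    fun n z hz => (hnormlt _ ((hself n).2 hz)).le
  -- pointwise Cauchy on the image
  have hcim : ∀ w ∈ F N '' unitDisk, CauchySeq fun n => h N n w := by
    rintro w ⟨z, hz, rfl⟩
    exact (hpt z hz).cauchySeq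
  -- apply Vitali
  have hUCS := vitali_global (fun n => h N n) (fun n => (hself n).1) hbnd
    himopen himne himsub hcim
  -- pointwise Cauchy everywhere on the disk
  have hcau : ∀ z ∈ unitDisk, CauchySeq fun n => h N n z := by
    intro z hz
    have := hUCS z hz 0 le_rfl (by linarith [hnormlt z hz])
    exact this.cauchySeq (mem_closedBall_self le_rfl)
  -- limit function
  have hex : ∀ z : ℂ, z ∈ unitDisk → ∃ L, Tendsto (fun n => h N n z) atTop (𝓝 L) :=
    fun z hz => cauchySeq_tendsto_of_complete (hcau z hz)
  classical
  set H : ℂ → ℂ := fun z => if hz : z ∈ unitDisk then (hex z hz).choose else 0 with hHdef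
  have hHt : ∀ z (hz : z ∈ unitDisk), Tendsto (fun n => h N n z) atTop (𝓝 (H z)) := by
    intro z hz
    rw [hHdef]
    simp only [dif_pos hz]
    exact (hex z hz).choose_spec
  -- locally uniform convergence
  have hTLU : TendstoLocallyUniformlyOn (fun n : ℕ => h N n) H atTop unitDisk := by
    intro u hu x hx
    set ρ : ℝ := (1 - ‖x‖) / 2 with hρdef
    have hρ0 : 0 < ρ := by have := hnormlt x hx; rw [hρdef]; linarith
    have hsubD : closedBall x ρ ⊆ unitDisk := by
      intro w hw
      apply hmem_of_norm
      simp only [mem_closedBall, dist_eq_norm] at hw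
      calc ‖w‖ = ‖x + (w - x)‖ := by ring_nf
        _ ≤ ‖x‖ + ‖w - x‖ := norm_add_le _ _
        _ ≤ ‖x‖ + ρ := by linarith
        _ < 1 := by rw [hρdef]; linarith [hnormlt x hx]
    have hUC : UniformCauchySeqOn (fun n => h N n) atTop (closedBall x ρ) :=
      hUCS x hx ρ hρ0.le (by rw [hρdef]; linarith [hnormlt x hx])
    have hTU : TendstoUniformlyOn (fun n => h N n) H atTop (closedBall x ρ) :=
      hUC.tendstoUniformlyOn_of_tendsto (fun w hw => hHt w (hsubD hw))
    refine ⟨closedBall x ρ ∩ unitDisk, ?_, ?_⟩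
    · exact Filter.inter_mem (mem_nhdsWithin_of_mem_nhds (closedBall_mem_nhds x hρ0))
        self_mem_nhdsWithin
    · exact (hTU u hu).mono fun n hn y hy => hn y hy.1
  -- H is differentiable
  have hHdiff : DifferentiableOn ℂ H unitDisk :=
    hTLU.differentiableOn (Eventually.of_forall fun n => (hself n).1) hDopen
  -- composition identity
  have hHcomp : ∀ z ∈ unitDisk, Flim z = H (F N z) := by
    intro z hz
    exact tendsto_nhds_unique (hpt z hz) (hHt (F N z) ((hFself N).2 hz))
  -- nonconstancy of H
  have hHnc : H (F N z₀) ≠ H (F N w₀) := by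
    rw [← hHcomp z₀ hz₀, ← hHcomp w₀ hw₀]
    exact hzw
  -- norm bound on H
  have hHle : ∀ z ∈ unitDisk, ‖H z‖ ≤ 1 := by
    intro z hz
    exact le_of_tendsto ((hHt z hz).norm) (Eventually.of_forall fun n => hbnd n z hz)
  -- H maps the disk into itself (strictly), by the maximum modulus principle
  have hHmaps : MapsTo H unitDisk unitDisk := by
    intro z hz
    by_contra hcon
    have h1 : ‖H z‖ = 1 := le_antisymm (hHle z hz) (by
      by_contra hlt
      push_neg at hlt
      exact hcon (hmem_of_norm _ hlt))
    have hmax : IsMaxOn (norm ∘ H) unitDisk z := by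
      rw [isMaxOn_iff]
      intro w hw
      simp only [Function.comp_apply, h1]
      exact hHle w hw
    have heqon := Complex.eqOn_of_isPreconnected_of_isMaxOn_norm hpre hDopen hHdiff hz hmax
    exact hHnc ((heqon ((hFself N).2 hz₀)).trans (heqon ((hFself N).2 hw₀)).symm)
  refine ⟨H, ⟨hHdiff, hHmaps⟩, ⟨F N z₀, (hFself N).2 hz₀, F N w₀, (hFself N).2 hw₀, hHnc⟩,
    hHcomp, hTLU⟩
end
end

section
/- Let 0 < ε < 1/9 and let H be a holomorphic self-map of the unit disk 𝔻 with H(0) = 0 and |H′(0)| > 1 − ε. Then the image H(𝔻) contains the disk {w ∈ ℂ : |w| < 1 − 3√ε}. -/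
open Filter Metric Set

noncomputable section

/-! ### Auxiliary lemmas -/

open scoped NNReal ENNReal

lemma normSq_mobius_identity (a b : ℂ) :
    Complex.normSq (1 - (starRingEnd ℂ) a * b) - Complex.normSq (a - b)
      = (1 - Complex.normSq a) * (1 - Complex.normSq b) := by
  simp only [Complex.normSq_apply, Complex.sub_re, Complex.sub_im, Complex.mul_re,
    Complex.mul_im, Complex.one_re, Complex.one_im, Complex.conj_re, Complex.conj_im]
  ring

lemma mobius_aux {a b : ℂ} (ha : ‖a‖ < 1) (hb : ‖b‖ < 1) :
    1 - (starRingEnd ℂ) a * b ≠ 0 ∧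
      ‖(a - b) / (1 - (starRingEnd ℂ) a * b)‖ < 1 := by
  have hna : Complex.normSq a < 1 := by
    rw [← Complex.sq_norm]; nlinarith [norm_nonneg a]
  have hnb : Complex.normSq b < 1 := by
    rw [← Complex.sq_norm]; nlinarith [norm_nonneg b]
  have hid := normSq_mobius_identity a b
  have hpos : 0 < (1 - Complex.normSq a) * (1 - Complex.normSq b) := by nlinarith
  have hlt : Complex.normSq (a - b) < Complex.normSq (1 - (starRingEnd ℂ) a * b) := by
    nlinarith [Complex.normSq_nonneg (a - b)]
  have hden : 1 - (starRingEnd ℂ) a * b ≠ 0 := by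
    intro h
    rw [h] at hlt
    simp [Complex.normSq_eq_zero] at hlt
    nlinarith [Complex.normSq_nonneg (a - b)]
  refine ⟨hden, ?_⟩
  rw [norm_div, div_lt_one]
  · rw [Complex.norm_def, Complex.norm_def]
    exact Real.sqrt_lt_sqrt (Complex.normSq_nonneg _) hlt
  · exact norm_pos_iff.2 hden

/-- Every holomorphic function on the unit disk has a primitive there. -/
lemma exists_primitive {f : ℂ → ℂ} (hf : DifferentiableOn ℂ f (Metric.ball (0:ℂ) 1)) :
    ∃ F : ℂ → ℂ, ∀ z ∈ Metric.ball (0:ℂ) 1, HasDerivAt F (f z) z := by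
  have hps : ∀ s : ℝ, 0 < s → s < 1 →
      HasFPowerSeriesOnBall f (cauchyPowerSeries f 0 s.toNNReal) 0 (s.toNNReal : ℝ≥0∞) := by
    intro s hs0 hs1
    refine DifferentiableOn.hasFPowerSeriesOnBall ?_ (by simpa using hs0)
    refine hf.mono ?_
    intro x hx
    rw [mem_closedBall, dist_zero_right, Real.coe_toNNReal _ hs0.le] at hx
    rw [mem_ball, dist_zero_right]
    exact lt_of_le_of_lt hx hs1
  set p := cauchyPowerSeries f 0 (Real.toNNReal (1/2)) with hpdef
  have hp_half := hps (1/2) (by norm_num) (by norm_num)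
  have hpeq : ∀ s : ℝ, 0 < s → s < 1 → cauchyPowerSeries f 0 s.toNNReal = p := by
    intro s hs0 hs1
    exact (hps s hs0 hs1).hasFPowerSeriesAt.eq_formalMultilinearSeries
      hp_half.hasFPowerSeriesAt
  set a : ℕ → ℂ := fun n => p.coeff n with ha
  refine ⟨fun z => ∑' n, (a n / (n+1)) * z^(n+1), ?_⟩
  intro z₀ hz₀
  have hz₀' : ‖z₀‖ < 1 := by simpa using hz₀
  have hz₀0 : (0:ℝ) ≤ ‖z₀‖ := norm_nonneg _
  obtain ⟨t, m, s, hz₀t, ht0, htm, hm1, hm0, hms, hs1, hs0⟩ :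
      ∃ t m s : ℝ, ‖z₀‖ < t ∧ 0 < t ∧ t < m ∧ m < 1 ∧ 0 < m ∧ m < s ∧ s < 1 ∧ 0 < s :=
    ⟨(‖z₀‖ + 1)/2, (‖z₀‖ + 3)/4, (‖z₀‖ + 7)/8, by linarith, by linarith, by linarith,
      by linarith, by linarith, by linarith, by linarith, by linarith⟩
  have hp_s := hps s hs0 hs1
  rw [hpeq s hs0 hs1] at hp_s
  -- coefficient bound at radius m
  have hmrad : (m.toNNReal : ℝ≥0∞) < p.radius := by
    refine lt_of_lt_of_le ?_ hp_s.r_le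
    rw [ENNReal.coe_lt_coe]
    exact (Real.toNNReal_lt_toNNReal_iff hs0).2 hms
  obtain ⟨C, hC0, hCb⟩ := p.norm_mul_pow_le_of_lt_radius hmrad
  have hCb' : ∀ n, ‖p n‖ * m ^ n ≤ C := by
    intro n
    have := hCb n
    rwa [Real.coe_toNNReal _ hm0.le] at this
  -- apply termwise differentiation
  have key : HasDerivAt (fun z => ∑' n, (a n / (n+1)) * z^(n+1))
      (∑' n, a n * z₀ ^ n) z₀ := by
    refine hasDerivAt_tsum_of_isPreconnected (𝕜 := ℂ) (F := ℂ)
      (u := fun n => C * (t/m)^n)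
      (g := fun n z => (a n / (n+1)) * z^(n+1)) (g' := fun n z => a n * z ^ n)
      ?_ isOpen_ball (convex_ball (0:ℂ) t).isPreconnected ?_ ?_
      (mem_ball_self ht0) ?_ (by simpa [mem_ball_zero_iff] using hz₀t)
    · exact (summable_geometric_of_lt_one (by positivity) (by
        rw [div_lt_one hm0]; exact htm)).mul_left C
    · intro n y hy
      have h := (hasDerivAt_pow (n+1) y).const_mul (a n / ((n:ℂ)+1))
      have hne' : ((n:ℂ)+1) ≠ 0 := Nat.cast_add_one_ne_zero n
      refine h.congr_deriv (Eq.symm ?_)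
      push_cast [Nat.add_sub_cancel]
      field_simp
    · intro n y hy
      have hyt : ‖y‖ ≤ t := le_of_lt (by simpa [mem_ball_zero_iff] using hy)
      have h1 : ‖p n‖ ≤ C / m ^ n := (le_div_iff₀ (pow_pos hm0 n)).2 (hCb' n)
      have hcn : ‖a n‖ = ‖p n‖ := FormalMultilinearSeries.norm_apply_eq_norm_coef.symm
      calc ‖a n * y ^ n‖ = ‖a n‖ * ‖y‖ ^ n := by rw [norm_mul, norm_pow]
        _ ≤ (C / m ^ n) * t ^ n := by
            refine mul_le_mul (hcn ▸ h1) (pow_le_pow_left₀ (norm_nonneg _) hyt n)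
              (by positivity) (by positivity)
        _ = C * (t/m)^n := by rw [div_pow]; ring
    · refine Summable.congr summable_zero (fun n => ?_)
      simp [zero_pow (Nat.succ_ne_zero n)]
  -- identify the sum of the derivative series with f
  have hmem : z₀ ∈ Metric.eball (0:ℂ) (s.toNNReal : ℝ≥0∞) := by
    rw [Metric.mem_eball, edist_dist, dist_zero_right]
    have hco : (s.toNNReal : ℝ≥0∞) = ENNReal.ofReal s := rfl
    rw [hco]
    exact (ENNReal.ofReal_lt_ofReal_iff hs0).2 (by linarith)
  have hsum : HasSum (fun n => a n * z₀ ^ n) (f z₀) := by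
    have h1 := hp_s.hasSum (y := z₀) (by simpa using hmem)
    simp only [FormalMultilinearSeries.apply_eq_pow_smul_coeff, smul_eq_mul, zero_add] at h1
    exact h1.congr_fun (fun n => mul_comm _ _)
  rwa [hsum.tsum_eq] at key

/-- Every nonvanishing holomorphic function on the unit disk has a holomorphic square root. -/
lemma exists_sqrt {f : ℂ → ℂ} (hf : DifferentiableOn ℂ f (Metric.ball (0:ℂ) 1))
    (hne : ∀ z ∈ Metric.ball (0:ℂ) 1, f z ≠ 0) :
    ∃ h : ℂ → ℂ, (∀ z ∈ Metric.ball (0:ℂ) 1, DifferentiableAt ℂ h z) ∧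
      ∀ z ∈ Metric.ball (0:ℂ) 1, h z ^ 2 = f z := by
  have h0mem : (0:ℂ) ∈ Metric.ball (0:ℂ) 1 := mem_ball_self one_pos
  have hdf : DifferentiableOn ℂ (deriv f) (Metric.ball (0:ℂ) 1) :=
    ((hf.analyticOnNhd isOpen_ball).deriv).differentiableOn
  have hq : DifferentiableOn ℂ (fun z => deriv f z / f z) (Metric.ball (0:ℂ) 1) :=
    hdf.div hf hne
  obtain ⟨L, hL⟩ := exists_primitive hq
  -- f z * exp (-L z) is constant
  set φ : ℂ → ℂ := fun z => f z * Complex.exp (-L z) with hφdef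
  have hφ0 : ∀ z ∈ Metric.ball (0:ℂ) 1, HasDerivAt φ 0 z := by
    intro z hz
    have hfz : HasDerivAt f (deriv f z) z :=
      (hf.differentiableAt (isOpen_ball.mem_nhds hz)).hasDerivAt
    have hLz : HasDerivAt L (deriv f z / f z) z := hL z hz
    have hexp : HasDerivAt (fun w => Complex.exp (-L w))
        (Complex.exp (-L z) * (-(deriv f z / f z))) z := hLz.neg.cexp
    have hmul := hfz.mul hexp
    have hfz0 : f z ≠ 0 := hne z hz
    refine hmul.congr_deriv (Eq.symm ?_)
    field_simp
    ring
  have hconst : ∀ z ∈ Metric.ball (0:ℂ) 1, φ z = φ 0 := by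
    intro z hz
    have h0map : (ContinuousLinearMap.toSpanSingleton ℂ (0:ℂ)) = 0 := by
      ext x; simp
    have hfd : ∀ x ∈ Metric.ball (0:ℂ) 1,
        HasFDerivWithinAt φ (0 : ℂ →L[ℂ] ℂ) (Metric.ball (0:ℂ) 1) x := by
      intro x hx
      have := (hφ0 x hx).hasFDerivAt
      rw [h0map] at this
      exact this.hasFDerivWithinAt
    have hb := (convex_ball (0:ℂ) 1).norm_image_sub_le_of_norm_hasFDerivWithin_le
      (C := 0) hfd (fun x _ => by simp) h0mem hz
    simp only [norm_zero, zero_mul] at hb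
    have := norm_le_zero_iff.1 hb
    exact sub_eq_zero.1 this
  have hfval : ∀ z ∈ Metric.ball (0:ℂ) 1, f z = f 0 * Complex.exp (L z - L 0) := by
    intro z hz
    have h1 : f z * Complex.exp (-L z) = f 0 * Complex.exp (-L 0) := hconst z hz
    have hmulz : Complex.exp (-L z) * Complex.exp (L z) = 1 := by
      rw [← Complex.exp_add]; simp
    calc f z = f z * (Complex.exp (-L z) * Complex.exp (L z)) := by rw [hmulz, mul_one]
      _ = (f z * Complex.exp (-L z)) * Complex.exp (L z) := by ring
      _ = (f 0 * Complex.exp (-L 0)) * Complex.exp (L z) := by rw [h1]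
      _ = f 0 * Complex.exp (L z - L 0) := by
          rw [sub_eq_add_neg, Complex.exp_add]; ring
  set c : ℂ := Complex.exp (Complex.log (f 0) / 2) with hcdef
  have hc2 : c ^ 2 = f 0 := by
    rw [hcdef, sq, ← Complex.exp_add, add_halves, Complex.exp_log (hne 0 h0mem)]
  refine ⟨fun z => c * Complex.exp ((L z - L 0) / 2), ?_, ?_⟩
  · intro z hz
    have : DifferentiableAt ℂ L z := (hL z hz).differentiableAt
    exact (((this.sub_const _).div_const _).cexp).const_mul c
  · intro z hz
    rw [mul_pow, hc2, sq, ← Complex.exp_add, add_halves, ← hfval z hz]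

/-- Schwarz–Pick inequality at the origin. -/
lemma schwarz_pick_zero {k : ℂ → ℂ} (hk : DifferentiableOn ℂ k (Metric.ball (0:ℂ) 1))
    (hm : Set.MapsTo k (Metric.ball (0:ℂ) 1) (Metric.ball (0:ℂ) 1)) :
    ‖deriv k 0‖ ≤ 1 - ‖k 0‖ ^ 2 := by
  have h0mem : (0:ℂ) ∈ Metric.ball (0:ℂ) 1 := mem_ball_self one_pos
  set a : ℂ := k 0 with hadef
  have ha : ‖a‖ < 1 := by
    have := hm h0mem
    rwa [mem_ball_zero_iff] at this
  have hna : Complex.normSq a < 1 := by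
    rw [← Complex.sq_norm]; nlinarith [norm_nonneg a]
  set D : ℂ := 1 - (starRingEnd ℂ) a * a with hDdef
  have hD : D ≠ 0 := (mobius_aux ha ha).1
  have hDval : D = ((1 - Complex.normSq a : ℝ) : ℂ) := by
    rw [hDdef]
    push_cast
    rw [← Complex.normSq_eq_conj_mul_self]
  have hDabs : ‖D‖ = 1 - Complex.normSq a := by
    rw [hDval, Complex.norm_real, Real.norm_eq_abs, abs_of_pos (by linarith)]
  set F : ℂ → ℂ := fun z => (a - k z) / (1 - (starRingEnd ℂ) a * k z) with hFdef
  have habsk : ∀ z ∈ Metric.ball (0:ℂ) 1, ‖k z‖ < 1 := by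
    intro z hz
    have := hm hz
    rwa [mem_ball_zero_iff] at this
  have hFd : DifferentiableOn ℂ F (Metric.ball (0:ℂ) 1) := by
    refine DifferentiableOn.div
      ((differentiableOn_const a).sub hk)
      ((differentiableOn_const 1).sub ((differentiableOn_const _).mul hk))
      (fun z hz => (mobius_aux ha (habsk z hz)).1)
  have hF0 : F 0 = 0 := by
    rw [hFdef]; simp [← hadef]
  have hFmaps : Set.MapsTo F (Metric.ball (0:ℂ) 1) (Metric.ball (F 0) 1) := by
    rw [hF0]
    intro z hz
    rw [mem_ball_zero_iff]
    exact (mobius_aux ha (habsk z hz)).2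
  have hS := Complex.norm_deriv_le_div_of_mapsTo_ball hFd (hFmaps.mono_right ball_subset_closedBall) one_pos
  -- compute the derivative of F at 0
  have hk0 : HasDerivAt k (deriv k 0) 0 :=
    (hk.differentiableAt (isOpen_ball.mem_nhds h0mem)).hasDerivAt
  have hnum : HasDerivAt (fun z => a - k z) (-deriv k 0) 0 := hk0.const_sub a
  have hden : HasDerivAt (fun z => 1 - (starRingEnd ℂ) a * k z)
      (-((starRingEnd ℂ) a * deriv k 0)) 0 := (hk0.const_mul _).const_sub 1
  have hden0 : (1 - (starRingEnd ℂ) a * k 0) ≠ 0 := by rw [← hadef, ← hDdef]; exact hD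
  have hdF : HasDerivAt F
      ((-deriv k 0 * (1 - (starRingEnd ℂ) a * k 0) -
        (a - k 0) * -((starRingEnd ℂ) a * deriv k 0)) /
        (1 - (starRingEnd ℂ) a * k 0) ^ 2) 0 := hnum.div hden hden0
  have hval : (-deriv k 0 * (1 - (starRingEnd ℂ) a * k 0) -
        (a - k 0) * -((starRingEnd ℂ) a * deriv k 0)) /
        (1 - (starRingEnd ℂ) a * k 0) ^ 2 = -(deriv k 0 / D) := by
    rw [← hadef, ← hDdef]
    field_simp
    ring
  rw [hdF.deriv, hval] at hS
  rw [norm_neg, norm_div, hDabs] at hS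
  norm_num at hS
  have hpos : 0 < 1 - Complex.normSq a := by linarith
  rw [div_le_one hpos] at hS
  rw [Complex.sq_norm]
  linarith [hS]

lemma real_arith (ε s t A : ℝ) (hε0 : 0 < ε) (hs2 : s ^ 2 = ε) (hs0 : 0 < s)
    (ht0 : 0 ≤ t) (hwa : t ^ 2 < 1 - 3 * s) (hAd : 1 - ε < A) (hA0 : 0 ≤ A)
    (hbound : A * (1 - t ^ 4) ≤ 2 * t * (1 - t ^ 2)) : False := by
  have hs13 : 3 * s < 1 := by nlinarith [sq_nonneg t]
  have ht1 : t < 1 := by nlinarith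
  have h1mt2 : 0 < 1 - t ^ 2 := by nlinarith
  have key : A * (1 + t ^ 2) ≤ 2 * t := by nlinarith
  have key2 : (1 - ε) * (1 + t ^ 2) < 2 * t := by
    have : (1 - ε) * (1 + t ^ 2) < A * (1 + t ^ 2) := by nlinarith
    linarith
  have ht2lt : t ^ 2 < 1 := by nlinarith
  have h3 : (1 - t) ^ 2 < 2 * s ^ 2 := by nlinarith [mul_lt_mul_of_pos_left ht2lt hε0]
  obtain ⟨r2, hr2def⟩ : ∃ r : ℝ, r = Real.sqrt 2 := ⟨_, rfl⟩
  have hr2 : r2 ^ 2 = 2 := by rw [hr2def]; exact Real.sq_sqrt (by norm_num)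
  have hr2pos : 0 < r2 := hr2def ▸ Real.sqrt_pos.2 (by norm_num)
  have hr2lt : r2 < 3 / 2 := by nlinarith
  have h4 : 1 - t < r2 * s := by nlinarith [mul_pos hr2pos hs0, ht1]
  have h5 : r2 * s < 1 / 2 := by nlinarith
  have h6 : (1 - r2 * s) ^ 2 < t ^ 2 := by nlinarith
  nlinarith [sq_nonneg s, mul_lt_mul_of_pos_right hr2lt hs0]

/-- If `0 < ε < 1/9` and `H` is a holomorphic self-map of the unit disk
with `H 0 = 0` and `|H′(0)| > 1 - ε`, then the image `H(𝔻)` contains the disk of radius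
`1 - 3√ε` about the origin. -/
theorem stmt_12
    (ε : ℝ) (hε0 : 0 < ε) (hε : ε < 1 / 9)
    (H : ℂ → ℂ) (hH : IsHolSelfMap H) (hfix : H 0 = 0)
    (hd : 1 - ε < ‖deriv H 0‖) :
    Metric.ball (0 : ℂ) (1 - 3 * Real.sqrt ε) ⊆ H '' unitDisk := by
  have hUD : unitDisk = Metric.ball (0:ℂ) 1 := rfl
  have h0mem : (0:ℂ) ∈ Metric.ball (0:ℂ) 1 := mem_ball_self one_pos
  obtain ⟨hHd, hHm⟩ := hH
  rw [hUD] at hHd hHm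
  intro w hw
  obtain ⟨s, hsdef⟩ : ∃ s : ℝ, s = Real.sqrt ε := ⟨_, rfl⟩
  have hs0 : 0 < s := hsdef ▸ Real.sqrt_pos.2 hε0
  have hs2 : s ^ 2 = ε := by rw [hsdef]; exact Real.sq_sqrt hε0.le
  have hwa : ‖w‖ < 1 - 3 * s := by
    rw [hsdef]
    rw [mem_ball_zero_iff] at hw
    exact hw
  have hs13 : 3 * s < 1 := by nlinarith [norm_nonneg w]
  have hw1 : ‖w‖ < 1 := by linarith
  by_contra hcon
  have hne : ∀ z ∈ Metric.ball (0:ℂ) 1, H z ≠ w := by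
    intro z hz heq
    exact hcon ⟨z, by rw [hUD]; exact hz, heq⟩
  have habsH : ∀ z ∈ Metric.ball (0:ℂ) 1, ‖H z‖ < 1 := by
    intro z hz
    have := hHm hz
    rwa [mem_ball_zero_iff] at this
  -- the omitted-value Möbius transform
  set g : ℂ → ℂ := fun z => (w - H z) / (1 - (starRingEnd ℂ) w * H z) with hgdef
  have hgd : DifferentiableOn ℂ g (Metric.ball (0:ℂ) 1) := by
    refine DifferentiableOn.div
      ((differentiableOn_const w).sub hHd)
      ((differentiableOn_const 1).sub ((differentiableOn_const _).mul hHd))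
      (fun z hz => (mobius_aux hw1 (habsH z hz)).1)
  have hgne : ∀ z ∈ Metric.ball (0:ℂ) 1, g z ≠ 0 := by
    intro z hz
    rw [hgdef]
    exact div_ne_zero (sub_ne_zero.2 (fun h => hne z hz h.symm))
      (mobius_aux hw1 (habsH z hz)).1
  have hgm : ∀ z ∈ Metric.ball (0:ℂ) 1, ‖g z‖ < 1 := by
    intro z hz
    exact (mobius_aux hw1 (habsH z hz)).2
  obtain ⟨h, hhd, hhsq⟩ := exists_sqrt hgd hgne
  have hhm : Set.MapsTo h (Metric.ball (0:ℂ) 1) (Metric.ball (0:ℂ) 1) := by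
    intro z hz
    rw [mem_ball_zero_iff]
    have h1 : ‖h z‖ ^ 2 < 1 := by
      rw [← norm_pow, hhsq z hz]
      exact hgm z hz
    nlinarith [norm_nonneg (h z)]
  have hhdOn : DifferentiableOn ℂ h (Metric.ball (0:ℂ) 1) :=
    fun z hz => (hhd z hz).differentiableWithinAt
  have hSP' := schwarz_pick_zero hhdOn hhm
  -- values at 0
  have hg0 : g 0 = w := by rw [hgdef]; simp [hfix]
  have hh02 : h 0 ^ 2 = w := by rw [hhsq 0 h0mem, hg0]
  obtain ⟨t, htdef⟩ : ∃ t : ℝ, t = ‖h 0‖ := ⟨_, rfl⟩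
  have hSP : ‖deriv h 0‖ ≤ 1 - t ^ 2 := by rw [htdef]; exact hSP'
  have ht0 : 0 ≤ t := htdef ▸ norm_nonneg _
  have ht2 : t ^ 2 = ‖w‖ := by rw [htdef, ← norm_pow, hh02]
  have ht1 : t < 1 := by nlinarith
  -- derivative of g at 0, two ways
  have hH0 : HasDerivAt H (deriv H 0) 0 :=
    (hHd.differentiableAt (isOpen_ball.mem_nhds h0mem)).hasDerivAt
  have hnum : HasDerivAt (fun z => w - H z) (-deriv H 0) 0 := hH0.const_sub w
  have hden : HasDerivAt (fun z => 1 - (starRingEnd ℂ) w * H z)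
      (-((starRingEnd ℂ) w * deriv H 0)) 0 := (hH0.const_mul _).const_sub 1
  have hden0 : (1 - (starRingEnd ℂ) w * H 0) ≠ 0 := by
    rw [hfix]; simp
  have hdg : HasDerivAt g
      ((-deriv H 0 * (1 - (starRingEnd ℂ) w * H 0) -
        (w - H 0) * -((starRingEnd ℂ) w * deriv H 0)) /
        (1 - (starRingEnd ℂ) w * H 0) ^ 2) 0 := hnum.div hden hden0
  have hdgval : (-deriv H 0 * (1 - (starRingEnd ℂ) w * H 0) -
        (w - H 0) * -((starRingEnd ℂ) w * deriv H 0)) /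
        (1 - (starRingEnd ℂ) w * H 0) ^ 2
        = -(deriv H 0) * (1 - ((Complex.normSq w : ℝ) : ℂ)) := by
    rw [hfix, ← Complex.mul_conj]
    ring
  -- derivative of h² at 0
  have hh0' : HasDerivAt h (deriv h 0) 0 := (hhd 0 h0mem).hasDerivAt
  have hsq : HasDerivAt (fun z => h z ^ 2) (2 * h 0 * deriv h 0) 0 := by
    have := hh0'.fun_pow 2
    simpa using this
  have hgeq : HasDerivAt g (2 * h 0 * deriv h 0) 0 := by
    refine hsq.congr_of_eventuallyEq ?_
    filter_upwards [isOpen_ball.mem_nhds h0mem] with z hz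
    exact (hhsq z hz).symm
  have huniq : 2 * h 0 * deriv h 0
      = -(deriv H 0) * (1 - ((Complex.normSq w : ℝ) : ℂ)) := by
    rw [← hdgval]
    exact hgeq.unique hdg
  -- take absolute values
  have hnsqw : Complex.normSq w = ‖w‖ ^ 2 := (Complex.sq_norm w).symm
  have hnsqw1 : Complex.normSq w < 1 := by nlinarith [norm_nonneg w]
  have habs_eq : 2 * t * ‖deriv h 0‖
      = ‖deriv H 0‖ * (1 - Complex.normSq w) := by
    have habs1 : ‖1 - ((Complex.normSq w : ℝ) : ℂ)‖ = 1 - Complex.normSq w := by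
      rw [show (1 : ℂ) - ((Complex.normSq w : ℝ) : ℂ) = ((1 - Complex.normSq w : ℝ) : ℂ) by
        push_cast; ring]
      rw [Complex.norm_real, Real.norm_eq_abs, abs_of_pos (by linarith)]
    have h2 := congrArg norm huniq
    rw [norm_mul, norm_mul, norm_mul, norm_neg, habs1, Complex.norm_two] at h2
    rw [htdef]
    exact h2
  obtain ⟨A, hAdef⟩ : ∃ A : ℝ, A = ‖deriv H 0‖ := ⟨_, rfl⟩
  have hA0 : 0 ≤ A := hAdef ▸ norm_nonneg _
  have hAd : 1 - ε < A := hAdef ▸ hd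
  have hbound : A * (1 - Complex.normSq w) ≤ 2 * t * (1 - t ^ 2) := by
    rw [hAdef, ← habs_eq]
    have h2 : 0 ≤ 2 * t := by linarith
    exact mul_le_mul_of_nonneg_left hSP h2
  -- now pure real arithmetic
  have hnsqt : Complex.normSq w = t ^ 4 := by rw [hnsqw, ← ht2]; ring
  rw [hnsqt] at hbound
  exact real_arith ε s t A hε0 hs2 hs0 ht0 (by rw [ht2]; exact hwa) hAd hA0 hbound
end
end
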